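/- In the glued binary tree GT(r), for any two quasi-leaves v_i and v_j there exist exactly two geodesic (shortest) v_i–v_j paths: one whose internal vertices lie entirely in the first copy of the binary tree, and one whose internal vertices lie entirely in the second copy; together these two paths induce a cycle C_{i,j}. -/

import Mathlib

def MVSet {V : Type*} (G : SimpleGraph V) (S : Set V) : Prop :=
  ∀ x ∈ S, ∀ y ∈ S, ∃ p : G.Walk x y, p.IsPath ∧ p.length = G.dist x y ∧
    ∀ z ∈ p.support, z ≠ x → z ≠ y → z ∉ S

def MVColoring {V : Type*} {α : Type*} (G : SimpleGraph V) (f : V → α) : Prop :=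
  ∀ a : α, MVSet G {v | f v = a}

noncomputable def chiMu {V : Type*} (G : SimpleGraph V) : ℕ :=
  sInf {k : ℕ | ∃ f : V → Fin k, MVColoring G f}

/-- `a` is a child of `b` in the tree of finite sequences. -/
def IsChild {t : ℕ} (a b : List (Fin t)) : Prop := ∃ x : Fin t, a = b ++ [x]

/-- The vertex set of the glued `t`-ary tree `GT(r,t)`: vertices of the first
copy of the perfect `t`-ary tree of depth `r` (including the identified leaves,
the quasi-leaves), together with the internal vertices of the second copy. -/
def GTVert (r t : ℕ) : Type :=
  {l : List (Fin t) // l.length ≤ r} ⊕ {l : List (Fin t) // l.length < r}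

/-- The glued `t`-ary tree `GT(r,t)`: two copies of the perfect `t`-ary tree of
depth `r` with their leaves pairwise identified. -/
def GT (r t : ℕ) : SimpleGraph (GTVert r t) :=
  SimpleGraph.fromRel (fun u v =>
    match u, v with
    | .inl a, .inl b => IsChild a.1 b.1
    | .inr a, .inr b => IsChild a.1 b.1
    | .inl a, .inr b => a.1.length = r ∧ IsChild a.1 b.1
    | .inr _, .inl _ => False)

/-- Quasi-leaves of `GT(r,t)`: the identified leaves of the two copies. -/
def IsQuasiLeaf {r t : ℕ} (v : GTVert r t) : Prop :=
  match v with
  | .inl a => a.1.length = r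
  | .inr _ => False

/-- Vertices in the first copy of the tree, not quasi-leaves. -/
def InCopyOne {r t : ℕ} (v : GTVert r t) : Prop :=
  match v with
  | .inl a => a.1.length < r
  | .inr _ => False

/-- Vertices in the second copy of the tree, not quasi-leaves. -/
def InCopyTwo {r t : ℕ} (v : GTVert r t) : Prop :=
  match v with
  | .inl _ => False
  | .inr _ => True

/-- A geodesic: a path realizing the distance between its endpoints. -/
def IsGeodesic {V : Type*} (G : SimpleGraph V) {u v : V} (p : G.Walk u v) : Prop :=
  p.IsPath ∧ p.length = G.dist u v


namespace GTAux

variable {α : Type*} [DecidableEq α]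

def cp : List α → List α → ℕ
  | [], _ => 0
  | _ :: _, [] => 0
  | a :: as, b :: bs => if a = b then cp as bs + 1 else 0

@[simp] lemma cp_nil_left (y : List α) : cp ([] : List α) y = 0 := by cases y <;> rfl

@[simp] lemma cp_nil_right (x : List α) : cp x ([] : List α) = 0 := by cases x <;> rfl

lemma cp_le_left : ∀ x y : List α, cp x y ≤ x.length
  | [], _ => by simp
  | _ :: _, [] => by simp
  | a :: as, b :: bs => by
    simp only [cp, List.length_cons]
    split
    · exact Nat.succ_le_succ (cp_le_left as bs)
    · exact Nat.zero_le _

lemma cp_comm : ∀ x y : List α, cp x y = cp y x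
  | [], y => by simp
  | x, [] => by simp
  | a :: as, b :: bs => by
    simp only [cp]
    rcases eq_or_ne a b with h | h
    · subst h; simp [cp_comm as bs]
    · simp [h, Ne.symm h]

lemma cp_le_right (x y : List α) : cp x y ≤ y.length := by
  rw [cp_comm]; exact cp_le_left y x

lemma cp_self (x : List α) : cp x x = x.length := by
  induction x with
  | nil => simp
  | cons a as ih => simp [cp, ih]

lemma cp_of_prefix : ∀ {x y : List α}, x <+: y → cp x y = x.length
  | [], y, _ => by simp
  | a :: as, [], h => by simpa using h.length_le
  | a :: as, b :: bs, h => by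
    rw [List.cons_prefix_cons] at h
    obtain ⟨rfl, h2⟩ := h
    simp [cp, cp_of_prefix h2]

lemma prefix_of_cp : ∀ {x y : List α}, cp x y = x.length → x <+: y
  | [], y, _ => List.nil_prefix
  | a :: as, [], h => by simp at h
  | a :: as, b :: bs, h => by
    simp only [cp, List.length_cons] at h
    split at h
    · next heq =>
      subst heq
      exact List.cons_prefix_cons.2 ⟨rfl, prefix_of_cp (Nat.succ_injective h)⟩
    · omega

lemma take_cp : ∀ x y : List α, x.take (cp x y) = y.take (cp x y)
  | [], y => by simp
  | x, [] => by simp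
  | a :: as, b :: bs => by
    simp only [cp]
    split
    · next heq => subst heq; simp [take_cp as bs]
    · simp

lemma le_cp_of_take_eq : ∀ (m : ℕ) (x y : List α), m ≤ x.length → x.take m = y.take m → m ≤ cp x y
  | 0, _, _, _, _ => Nat.zero_le _
  | m + 1, [], y, hm, _ => by simp at hm
  | m + 1, a :: as, [], hm, h => by simp at h
  | m + 1, a :: as, b :: bs, hm, h => by
    simp only [List.take_succ_cons, List.cons.injEq] at h
    obtain ⟨rfl, h2⟩ := h
    simp only [cp, if_pos rfl]
    exact Nat.succ_le_succ (le_cp_of_take_eq m as bs (by simpa using hm) h2)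

lemma cp_min (a x b : List α) : min (cp a x) (cp x b) ≤ cp a b := by
  set m := min (cp a x) (cp x b) with hm
  have h1 : a.take m = x.take m := by
    have := congrArg (List.take m) (take_cp a x)
    rw [List.take_take, List.take_take, min_eq_left (min_le_left _ _ : m ≤ cp a x)] at this
    exact this
  have h2 : x.take m = b.take m := by
    have := congrArg (List.take m) (take_cp x b)
    rw [List.take_take, List.take_take, min_eq_left (min_le_right _ _ : m ≤ cp x b)] at this
    exact this
  exact le_cp_of_take_eq m a b (le_trans (min_le_left _ _) (cp_le_left a x)) (h1.trans h2)

lemma cp_snoc_not_prefix : ∀ (b x : List α) (i : α), ¬ (x ++ [i] <+: b) → cp b (x ++ [i]) = cp b x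
  | [], x, i, _ => by simp
  | c :: cs, [], i, h => by
    simp only [List.nil_append, cp]
    have : ¬ (i = c) := fun hic => h (by subst hic; exact ⟨cs, rfl⟩)
    rw [if_neg (fun hci => this hci.symm)]
  | c :: cs, x' :: xs, i, h => by
    simp only [List.cons_append, cp]
    rcases eq_or_ne c x' with rfl | hne
    · rw [if_pos rfl, if_pos rfl]
      have : ¬ (xs ++ [i] <+: cs) := fun hp => h (List.cons_prefix_cons.2 ⟨rfl, hp⟩)
      rw [cp_snoc_not_prefix cs xs i this]
    · rw [if_neg hne, if_neg hne]

lemma cp_snoc_prefix (b x : List α) (i : α) (h : x ++ [i] <+: b) :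
    cp b (x ++ [i]) = x.length + 1 := by
  rw [cp_comm, cp_of_prefix h, List.length_append, List.length_singleton]

lemma eq_of_cp_of_length (x y : List α) (h : cp x y = x.length) (hl : x.length = y.length) :
    x = y := (prefix_of_cp h).eq_of_length hl

end GTAux
namespace GTAux

open SimpleGraph

variable {r : ℕ}

/-- Projection to the underlying list. -/
def lst : GTVert r 2 → List (Fin 2)
  | .inl a => a.1
  | .inr a => a.1

@[simp] lemma lst_inl (a : {l : List (Fin 2) // l.length ≤ r}) :
    lst (Sum.inl a : GTVert r 2) = a.1 := rfl

@[simp] lemma lst_inr (a : {l : List (Fin 2) // l.length < r}) :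
    lst (Sum.inr a : GTVert r 2) = a.1 := rfl

lemma lst_length_le (w : GTVert r 2) : (lst w).length ≤ r := by
  cases w with
  | inl a => exact a.2
  | inr a => exact le_of_lt a.2

/-- Potential: distance from a vertex with list `x` to the quasi-leaf `c`. -/
def psiL (r : ℕ) (c x : List (Fin 2)) : ℕ :=
  (r - cp c x) + (x.length - cp c x)

lemma psiL_child_lt {c : List (Fin 2)} (hc : c.length = r) {x : List (Fin 2)} {i : Fin 2}
    (h : x ++ [i] <+: c) : psiL r c (x ++ [i]) + 1 = psiL r c x := by
  have hxp : x <+: c := ((x.prefix_append [i]).trans h)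
  have h1 : cp c (x ++ [i]) = x.length + 1 := cp_snoc_prefix c x i h
  have h2 : cp c x = x.length := by rw [cp_comm]; exact cp_of_prefix hxp
  have h3 : x.length + 1 ≤ r := by
    have := h.length_le; simpa [hc] using this
  simp only [psiL, h1, h2, List.length_append, List.length_singleton]
  omega

lemma psiL_child_gt {c : List (Fin 2)} {x : List (Fin 2)} {i : Fin 2}
    (h : ¬ (x ++ [i] <+: c)) : psiL r c (x ++ [i]) = psiL r c x + 1 := by
  have h1 : cp c (x ++ [i]) = cp c x := cp_snoc_not_prefix c x i h
  have h2 : cp c x ≤ x.length := by rw [cp_comm]; exact cp_le_left x c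
  have h3 : cp c x ≤ x.length + 1 := by omega
  have h4 : ¬ (x ++ [i] <+: c) → True := fun _ => trivial
  simp only [psiL, h1, List.length_append, List.length_singleton]
  omega

lemma psiL_step {c : List (Fin 2)} (hc : c.length = r) (x : List (Fin 2)) (i : Fin 2) :
    psiL r c (x ++ [i]) + 1 = psiL r c x ∨ psiL r c x + 1 = psiL r c (x ++ [i]) := by
  by_cases h : x ++ [i] <+: c
  · exact Or.inl (psiL_child_lt hc h)
  · exact Or.inr (psiL_child_gt h).symm

lemma psiL_self {c : List (Fin 2)} (hc : c.length = r) : psiL r c c = 0 := by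
  simp [psiL, cp_self, hc]

/-- Every edge of `GT r 2` is a parent-child edge at the list level. -/
lemma adj_lst {w w' : GTVert r 2} (h : (GT r 2).Adj w w') :
    (∃ i, lst w' = lst w ++ [i]) ∨ (∃ i, lst w = lst w' ++ [i]) := by
  rw [GT, fromRel_adj] at h
  obtain ⟨-, h | h⟩ := h <;>
  · cases w with
    | inl a => cases w' with
      | inl b => first
        | (obtain ⟨i, hi⟩ := h; exact Or.inr ⟨i, hi⟩)
        | (obtain ⟨i, hi⟩ := h; exact Or.inl ⟨i, hi⟩)
      | inr b => first
        | (obtain ⟨-, i, hi⟩ := h; exact Or.inr ⟨i, hi⟩)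
        | exact absurd h (by simp [GT])
    | inr a => cases w' with
      | inl b => first
        | (obtain ⟨-, i, hi⟩ := h; exact Or.inl ⟨i, hi⟩)
        | exact absurd h (by simp [GT])
      | inr b => first
        | (obtain ⟨i, hi⟩ := h; exact Or.inr ⟨i, hi⟩)
        | (obtain ⟨i, hi⟩ := h; exact Or.inl ⟨i, hi⟩)

end GTAux
namespace GTAux

open SimpleGraph

variable {r : ℕ}

lemma ne_snoc (x : List (Fin 2)) (i : Fin 2) : x ≠ x ++ [i] := by
  intro h
  have := congrArg List.length h
  simp at this

lemma adj_inl_inl {x : List (Fin 2)} {i : Fin 2} (h1 : x.length ≤ r) (h2 : (x ++ [i]).length ≤ r) :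
    (GT r 2).Adj (Sum.inl ⟨x, h1⟩) (Sum.inl ⟨x ++ [i], h2⟩) := by
  refine (fromRel_adj _ _ _).2 ?_
  exact ⟨fun h => ne_snoc x i (congrArg lst h), Or.inr ⟨i, rfl⟩⟩

lemma adj_inr_inr {x : List (Fin 2)} {i : Fin 2} (h1 : x.length < r) (h2 : (x ++ [i]).length < r) :
    (GT r 2).Adj (Sum.inr ⟨x, h1⟩) (Sum.inr ⟨x ++ [i], h2⟩) := by
  refine (fromRel_adj _ _ _).2 ?_
  exact ⟨fun h => ne_snoc x i (congrArg lst h), Or.inr ⟨i, rfl⟩⟩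

lemma adj_inl_inr {x : List (Fin 2)} {i : Fin 2} (h1 : x.length < r) (h2 : (x ++ [i]).length ≤ r)
    (h3 : (x ++ [i]).length = r) :
    (GT r 2).Adj (Sum.inl ⟨x ++ [i], h2⟩) (Sum.inr ⟨x, h1⟩) := by
  refine (fromRel_adj _ _ _).2 ?_
  exact ⟨(fun h => by cases h), Or.inl ⟨h3, i, rfl⟩⟩

end GTAux
namespace GTAux

open SimpleGraph

variable {r : ℕ}

lemma adj_of_inl_lt {x : List (Fin 2)} {hx : x.length ≤ r} {w' : GTVert r 2}
    (hlt : x.length < r) (h : (GT r 2).Adj (Sum.inl ⟨x, hx⟩) w') :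
    ∃ (y : List (Fin 2)) (hy : y.length ≤ r),
      w' = Sum.inl ⟨y, hy⟩ ∧ (IsChild x y ∨ IsChild y x) := by
  replace h := (fromRel_adj _ _ _).1 h
  obtain ⟨-, h | h⟩ := h
  · cases w' with
    | inl b => exact ⟨b.1, b.2, rfl, Or.inl h⟩
    | inr b => exact absurd h.1 hlt.ne
  · cases w' with
    | inl b => exact ⟨b.1, b.2, rfl, Or.inr h⟩
    | inr b => exact h.elim

lemma adj_of_inr {x : List (Fin 2)} {hx : x.length < r} {w' : GTVert r 2}
    (h : (GT r 2).Adj (Sum.inr ⟨x, hx⟩) w') :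
    (∃ (y : List (Fin 2)) (hy : y.length < r),
      w' = Sum.inr ⟨y, hy⟩ ∧ (IsChild x y ∨ IsChild y x)) ∨
    (∃ (y : List (Fin 2)) (hy : y.length ≤ r),
      w' = Sum.inl ⟨y, hy⟩ ∧ y.length = r ∧ IsChild y x) := by
  replace h := (fromRel_adj _ _ _).1 h
  obtain ⟨-, h | h⟩ := h
  · cases w' with
    | inl b => exact h.elim
    | inr b => exact Or.inl ⟨b.1, b.2, rfl, Or.inl h⟩
  · cases w' with
    | inl b => exact Or.inr ⟨b.1, b.2, rfl, h.1, h.2⟩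
    | inr b => exact Or.inl ⟨b.1, b.2, rfl, Or.inr h⟩

lemma adj_of_leaf {a : List (Fin 2)} {ha : a.length ≤ r} {w' : GTVert r 2}
    (har : a.length = r) (h : (GT r 2).Adj (Sum.inl ⟨a, ha⟩) w') :
    ∃ (y : List (Fin 2)) (hy : y.length < r) (i : Fin 2), a = y ++ [i] ∧
      (w' = Sum.inl ⟨y, le_of_lt hy⟩ ∨ w' = Sum.inr ⟨y, hy⟩) := by
  replace h := (fromRel_adj _ _ _).1 h
  obtain ⟨-, h | h⟩ := h
  · cases w' with
    | inl b =>
      obtain ⟨i, hi⟩ := h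
      replace hi : a = b.1 ++ [i] := hi
      have hblen : b.1.length < r := by
        have := congrArg List.length hi
        simp [har] at this
        omega
      exact ⟨b.1, hblen, i, hi, Or.inl (by simp; rfl)⟩
    | inr b =>
      obtain ⟨-, i, hi⟩ := h
      exact ⟨b.1, b.2, i, hi, Or.inr (by simp; rfl)⟩
  · cases w' with
    | inl b =>
      obtain ⟨i, hi⟩ := h
      replace hi : b.1 = a ++ [i] := hi
      exfalso
      have := congrArg List.length hi
      have hb2 := b.2
      simp [har] at this
      omega
    | inr b => exact h.elim

/-- Characterization of a step that decreases the potential. -/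
lemma decrease_char {c : List (Fin 2)} (hc : c.length = r) {x y : List (Fin 2)}
    (hrel : IsChild x y ∨ IsChild y x) (hdec : psiL r c y + 1 = psiL r c x) :
    (∃ i, y = x ++ [i] ∧ y <+: c) ∨ (∃ i, x = y ++ [i] ∧ ¬ x <+: c) := by
  rcases hrel with ⟨i, hi⟩ | ⟨i, hi⟩
  · -- x = y ++ [i] : y is the parent
    right
    refine ⟨i, hi, fun hp => ?_⟩
    rw [hi] at hdec hp
    have := psiL_child_lt hc hp
    omega
  · -- y = x ++ [i] : y is a child
    left
    refine ⟨i, hi, ?_⟩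
    by_contra hp
    rw [hi] at hdec hp
    have := psiL_child_gt (c := c) (r := r) hp
    omega

lemma list_step_unique {c : List (Fin 2)} (hc : c.length = r) {x y1 y2 : List (Fin 2)}
    (h1 : IsChild x y1 ∨ IsChild y1 x) (h2 : IsChild x y2 ∨ IsChild y2 x)
    (hd1 : psiL r c y1 + 1 = psiL r c x) (hd2 : psiL r c y2 + 1 = psiL r c x) :
    y1 = y2 := by
  rcases decrease_char hc h1 hd1 with ⟨i1, hi1, hp1⟩ | ⟨i1, hi1, hp1⟩ <;>
    rcases decrease_char hc h2 hd2 with ⟨i2, hi2, hp2⟩ | ⟨i2, hi2, hp2⟩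
  · -- both children, both prefixes of c
    have e1 : y1 = c.take y1.length := List.prefix_iff_eq_take.1 hp1
    have e2 : y2 = c.take y2.length := List.prefix_iff_eq_take.1 hp2
    have : y1.length = y2.length := by
      rw [hi1, hi2]; simp
    rw [e1, e2, this]
  · exact absurd ((x.prefix_append [i1]).trans (hi1 ▸ hp1)) hp2
  · exact absurd ((x.prefix_append [i2]).trans (hi2 ▸ hp2)) hp1
  · -- both parents
    have : y1 = x.dropLast := by rw [hi1, List.dropLast_concat]
    have h2' : y2 = x.dropLast := by rw [hi2, List.dropLast_concat]
    rw [this, h2']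

/-- The potential of a vertex, relative to a quasi-leaf list `c`. -/
def psi (c : List (Fin 2)) (w : GTVert r 2) : ℕ := psiL r c (lst w)

lemma psi_adj {c : List (Fin 2)} (hc : c.length = r) {w w' : GTVert r 2}
    (h : (GT r 2).Adj w w') :
    psi c w' + 1 = psi c w ∨ psi c w + 1 = psi c w' := by
  rcases adj_lst h with ⟨i, hi⟩ | ⟨i, hi⟩
  · rcases psiL_step hc (lst w) i with h' | h'
    · left; rw [psi, psi, hi]; exact h'
    · right; rw [psi, psi, hi]; exact h'
  · rcases psiL_step hc (lst w') i with h' | h'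
    · right; rw [psi, psi, hi]; exact h'
    · left; rw [psi, psi, hi]; exact h'

lemma step_unique {b : List (Fin 2)} (hb : b.length = r) {w w1 w2 : GTVert r 2}
    (hw : ¬ IsQuasiLeaf w) (h1 : (GT r 2).Adj w w1) (h2 : (GT r 2).Adj w w2)
    (hd1 : psi b w1 + 1 = psi b w) (hd2 : psi b w2 + 1 = psi b w) : w1 = w2 := by
  cases w with
  | inl a =>
    have hlt : a.1.length < r := lt_of_le_of_ne a.2 (fun h => hw (by exact h))
    obtain ⟨y1, hy1, rfl, hr1⟩ := adj_of_inl_lt hlt h1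
    obtain ⟨y2, hy2, rfl, hr2⟩ := adj_of_inl_lt hlt h2
    have : y1 = y2 := list_step_unique hb hr1 hr2 hd1 hd2
    subst this; rfl
  | inr a =>
    have key : ∀ {w' : GTVert r 2}, (GT r 2).Adj (Sum.inr a) w' →
        (IsChild a.1 (lst w') ∨ IsChild (lst w') a.1) := by
      intro w' h
      rcases adj_of_inr (hx := a.2) (by exact h) with ⟨y, hy, rfl, hrel⟩ | ⟨y, hy, rfl, -, hrel⟩
      · exact hrel
      · exact Or.inr hrel
    have hl : lst w1 = lst w2 := list_step_unique hb (key h1) (key h2) hd1 hd2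
    rcases adj_of_inr (hx := a.2) (by exact h1) with ⟨y1, hy1, rfl, -⟩ | ⟨y1, hy1, rfl, hy1r, -⟩ <;>
      rcases adj_of_inr (hx := a.2) (by exact h2) with ⟨y2, hy2, rfl, -⟩ | ⟨y2, hy2, rfl, hy2r, -⟩ <;>
      simp only [lst_inl, lst_inr] at hl <;> subst hl
    · rfl
    · exact absurd hy1 (by omega)
    · exact absurd hy2 (by omega)
    · rfl

end GTAux
namespace GTAux

open SimpleGraph

variable {r : ℕ}

lemma psi_le_length {c : List (Fin 2)} (hc : c.length = r)
    {w v0 : GTVert r 2} (p : (GT r 2).Walk w v0) : psi c w ≤ p.length + psi c v0 := by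
  induction p with
  | nil => rw [Walk.length_nil]; omega
  | cons h q ih =>
    rw [Walk.length_cons]
    rcases psi_adj hc h with h' | h' <;> omega

lemma psi_eq_zero {c : List (Fin 2)} (hc : c.length = r) (hc' : c.length ≤ r)
    {w : GTVert r 2} (h : psi c w = 0) : w = Sum.inl ⟨c, hc'⟩ := by
  cases w with
  | inl a =>
    have h1 : cp c a.1 ≤ a.1.length := cp_le_right c a.1
    have h2 : cp c a.1 ≤ c.length := cp_le_left c a.1
    have h3 : psiL r c a.1 = 0 := h
    rw [psiL] at h3
    have h4 : cp c a.1 = c.length := by omega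
    have h5 : c = a.1 := eq_of_cp_of_length c a.1 h4 (by omega)
    exact congrArg Sum.inl (Subtype.ext h5.symm)
  | inr a =>
    exfalso
    have h1 : cp c a.1 ≤ a.1.length := cp_le_right c a.1
    have h2 : a.1.length < r := a.2
    have h3 : psiL r c a.1 = 0 := h
    rw [psiL] at h3
    omega

lemma psi_v_zero {b : List (Fin 2)} (hb : b.length = r) (hb' : b.length ≤ r) :
    psi b (Sum.inl ⟨b, hb'⟩ : GTVert r 2) = 0 := by
  simp only [psi, lst_inl]
  exact psiL_self hb

lemma tight_cons {b : List (Fin 2)} (hb : b.length = r) {w w' v0 : GTVert r 2}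
    (hv0 : psi b v0 = 0) (h : (GT r 2).Adj w w')
    (q : (GT r 2).Walk w' v0) (hlen : q.length + 1 = psi b w) :
    q.length = psi b w' ∧ psi b w' + 1 = psi b w := by
  have h1 := psi_le_length hb q
  rcases psi_adj hb h with h' | h' <;> omega

lemma tight_support {b : List (Fin 2)} (hb : b.length = r) {w v0 : GTVert r 2}
    (hv0 : psi b v0 = 0) (p : (GT r 2).Walk w v0)
    (hlen : p.length = psi b w) : ∀ z ∈ p.support, psi b z ≤ psi b w := by
  induction p with
  | nil => intro z hz; rw [Walk.support_nil, List.mem_singleton] at hz; subst hz; exact le_refl _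
  | cons h q ih =>
    intro z hz
    rw [Walk.length_cons] at hlen
    obtain ⟨hq, hstep⟩ := tight_cons hb hv0 h q hlen
    rw [Walk.support_cons, List.mem_cons] at hz
    rcases hz with rfl | hz
    · exact le_refl _
    · have := ih hv0 hq z hz
      omega

lemma tight_path {b : List (Fin 2)} (hb : b.length = r) {w v0 : GTVert r 2}
    (hv0 : psi b v0 = 0) (p : (GT r 2).Walk w v0)
    (hlen : p.length = psi b w) : p.IsPath := by
  induction p with
  | nil => exact Walk.IsPath.nil
  | cons h q ih =>
    rw [Walk.length_cons] at hlen
    obtain ⟨hq, hstep⟩ := tight_cons hb hv0 h q hlen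
    refine (ih hv0 hq).cons ?_
    intro hmem
    have := tight_support hb hv0 q hq _ hmem
    omega

lemma unique_tight {b : List (Fin 2)} (hb : b.length = r) (hb' : b.length ≤ r) (n : ℕ) :
    ∀ (w : GTVert r 2), psi b w = n →
    ∀ p1 p2 : (GT r 2).Walk w (Sum.inl ⟨b, hb'⟩), p1.length = n → p2.length = n →
    (∀ z ∈ p1.support, z ≠ Sum.inl ⟨b, hb'⟩ → ¬ IsQuasiLeaf z) →
    (∀ z ∈ p2.support, z ≠ Sum.inl ⟨b, hb'⟩ → ¬ IsQuasiLeaf z) →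
    p1 = p2 := by
  have hv0 : psi b (Sum.inl ⟨b, hb'⟩ : GTVert r 2) = 0 := psi_v_zero hb hb'
  induction n with
  | zero =>
    intro w hw p1 p2 h1 h2 _ _
    have hwv := psi_eq_zero hb hb' hw
    subst hwv
    erw [Walk.length_eq_zero_iff, Walk.nil_iff_eq_nil] at h1 h2
    rw [h1, h2]
  | succ n ih =>
    intro w hw p1 p2 h1 h2 hs1 hs2
    cases p1 with
    | nil => erw [Walk.length_nil] at h1; omega
    | @cons _ z1 _ hadj1 q1 =>
      cases p2 with
      | nil => erw [Walk.length_nil] at h2; omega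
      | @cons _ z2 _ hadj2 q2 =>
        erw [Walk.length_cons] at h1 h2
        obtain ⟨hq1, hst1⟩ := tight_cons hb hv0 hadj1 q1 (by omega)
        obtain ⟨hq2, hst2⟩ := tight_cons hb hv0 hadj2 q2 (by omega)
        have hwv : w ≠ Sum.inl ⟨b, hb'⟩ := by
          intro hh
          rw [hh, hv0] at hw
          omega
        have hwq : ¬ IsQuasiLeaf w := hs1 w (Walk.start_mem_support _) hwv
        have hz : z1 = z2 := step_unique hb hwq hadj1 hadj2 (by omega) (by omega)
        subst hz
        have hqq : q1 = q2 := by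
          refine ih z1 (by omega) q1 q2 (by omega) (by omega) ?_ ?_
          · intro z hz hzv
            exact hs1 z (by erw [Walk.support_cons]; exact List.mem_cons_of_mem _ hz) hzv
          · intro z hz hzv
            exact hs2 z (by erw [Walk.support_cons]; exact List.mem_cons_of_mem _ hz) hzv
        rw [hqq]

end GTAux
namespace GTAux

open SimpleGraph

variable {r : ℕ}

lemma prefix_snoc (b x : List (Fin 2)) (hx : x <+: b) (hlt : x.length < b.length) :
    x ++ [b[x.length]'hlt] <+: b := by
  have h1 : x = b.take x.length := List.prefix_iff_eq_take.1 hx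
  have h2 : x ++ [b[x.length]'hlt] = b.take (x.length + 1) := by
    rw [← List.take_concat_get hlt, List.concat_eq_append, ← h1]
  rw [h2]
  exact List.take_prefix _ _

/-- Descending walk in the first copy. -/
def downTo1 (b : List (Fin 2)) (hb : b.length ≤ r) :
    (n : ℕ) → (x : List (Fin 2)) → (hx : x <+: b) → (hn : x.length + n = b.length) →
    (GT r 2).Walk (Sum.inl ⟨x, le_trans hx.length_le hb⟩) (Sum.inl ⟨b, hb⟩)
  | 0, x, hx, hn =>
    Walk.nil.copy (congrArg Sum.inl (Subtype.ext (hx.eq_of_length (by omega)).symm)) rfl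
  | n + 1, x, hx, hn =>
    have hlt : x.length < b.length := by omega
    have hx' : x ++ [b[x.length]'hlt] <+: b := prefix_snoc b x hx hlt
    Walk.cons (adj_inl_inl (le_trans hx.length_le hb) (le_trans hx'.length_le hb))
      (downTo1 b hb n (x ++ [b[x.length]'hlt]) hx' (by simp; omega))

lemma downTo1_length (b : List (Fin 2)) (hb : b.length ≤ r) :
    ∀ (n : ℕ) (x : List (Fin 2)) (hx : x <+: b) (hn : x.length + n = b.length),
    (downTo1 (r := r) b hb n x hx hn).length = n
  | 0, x, hx, hn => by simp [downTo1]; erw [Walk.length_copy]; rfl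
  | n + 1, x, hx, hn => by
    simp [downTo1, downTo1_length b hb n]; erw [Walk.length_cons, downTo1_length b hb n]

lemma downTo1_support (b : List (Fin 2)) (hb : b.length ≤ r) :
    ∀ (n : ℕ) (x : List (Fin 2)) (hx : x <+: b) (hn : x.length + n = b.length),
    ∀ z ∈ (downTo1 (r := r) b hb n x hx hn).support,
      ∃ (w : List (Fin 2)) (h : w.length ≤ r), z = Sum.inl ⟨w, h⟩ ∧ w <+: b
  | 0, x, hx, hn => by
    intro z hz
    simp only [downTo1, Walk.support_copy, Walk.support_nil, List.mem_singleton] at hz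
    erw [Walk.support_copy, Walk.support_nil, List.mem_singleton] at hz
    exact ⟨b, hb, hz, List.prefix_refl b⟩
  | n + 1, x, hx, hn => by
    intro z hz
    simp only [downTo1, Walk.support_cons, List.mem_cons] at hz
    erw [Walk.support_cons, List.mem_cons] at hz
    rcases hz with rfl | hz
    · exact ⟨x, le_trans hx.length_le hb, rfl, hx⟩
    · exact downTo1_support b hb n _ _ _ z hz

/-- Descending walk in the second copy (strictly inside). -/
def downTo2mid (b : List (Fin 2)) (hb : b.length < r) :
    (n : ℕ) → (x : List (Fin 2)) → (hx : x <+: b) → (hn : x.length + n = b.length) →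
    (GT r 2).Walk (Sum.inr ⟨x, lt_of_le_of_lt hx.length_le hb⟩) (Sum.inr ⟨b, hb⟩)
  | 0, x, hx, hn =>
    Walk.nil.copy (congrArg Sum.inr (Subtype.ext (hx.eq_of_length (by omega)).symm)) rfl
  | n + 1, x, hx, hn =>
    have hlt : x.length < b.length := by omega
    have hx' : x ++ [b[x.length]'hlt] <+: b := prefix_snoc b x hx hlt
    Walk.cons (adj_inr_inr (lt_of_le_of_lt hx.length_le hb) (lt_of_le_of_lt hx'.length_le hb))
      (downTo2mid b hb n (x ++ [b[x.length]'hlt]) hx' (by simp; omega))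

lemma downTo2mid_length (b : List (Fin 2)) (hb : b.length < r) :
    ∀ (n : ℕ) (x : List (Fin 2)) (hx : x <+: b) (hn : x.length + n = b.length),
    (downTo2mid (r := r) b hb n x hx hn).length = n
  | 0, x, hx, hn => by simp [downTo2mid]; erw [Walk.length_copy]; rfl
  | n + 1, x, hx, hn => by
    simp [downTo2mid, downTo2mid_length b hb n]; erw [Walk.length_cons, downTo2mid_length b hb n]

lemma downTo2mid_support (b : List (Fin 2)) (hb : b.length < r) :
    ∀ (n : ℕ) (x : List (Fin 2)) (hx : x <+: b) (hn : x.length + n = b.length),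
    ∀ z ∈ (downTo2mid (r := r) b hb n x hx hn).support,
      ∃ (w : List (Fin 2)) (h : w.length < r), z = Sum.inr ⟨w, h⟩
  | 0, x, hx, hn => by
    intro z hz
    simp only [downTo2mid, Walk.support_copy, Walk.support_nil, List.mem_singleton] at hz
    erw [Walk.support_copy, Walk.support_nil, List.mem_singleton] at hz
    exact ⟨b, hb, hz⟩
  | n + 1, x, hx, hn => by
    intro z hz
    simp only [downTo2mid, Walk.support_cons, List.mem_cons] at hz
    erw [Walk.support_cons, List.mem_cons] at hz
    rcases hz with rfl | hz
    · exact ⟨x, lt_of_le_of_lt hx.length_le hb, rfl⟩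
    · exact downTo2mid_support b hb n _ _ _ z hz

/-- Descending walk in the second copy ending at a quasi-leaf. -/
def downTo2fin (b : List (Fin 2)) (hbr : b.length = r) (hb' : b.length ≤ r) :
    (n : ℕ) → (x : List (Fin 2)) → (hxr : x.length < r) → (hx : x <+: b) →
    (hn : x.length + (n + 1) = b.length) →
    (GT r 2).Walk (Sum.inr ⟨x, hxr⟩) (Sum.inl ⟨b, hb'⟩)
  | 0, x, hxr, hx, hn =>
    have hlt : x.length < b.length := by omega
    have hx' : x ++ [b[x.length]'hlt] <+: b := prefix_snoc b x hx hlt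
    have he : x ++ [b[x.length]'hlt] = b := hx'.eq_of_length (by simp; omega)
    (Walk.cons ((adj_inl_inr hxr (le_trans hx'.length_le hb') (by simp; omega)).symm)
      Walk.nil).copy rfl (congrArg Sum.inl (Subtype.ext he))
  | n + 1, x, hxr, hx, hn =>
    have hlt : x.length < b.length := by omega
    have hx' : x ++ [b[x.length]'hlt] <+: b := prefix_snoc b x hx hlt
    have hxr' : (x ++ [b[x.length]'hlt]).length < r := by simp; omega
    Walk.cons (adj_inr_inr hxr hxr')
      (downTo2fin b hbr hb' n (x ++ [b[x.length]'hlt]) hxr' hx' (by simp; omega))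

lemma downTo2fin_length (b : List (Fin 2)) (hbr : b.length = r) (hb' : b.length ≤ r) :
    ∀ (n : ℕ) (x : List (Fin 2)) (hxr : x.length < r) (hx : x <+: b)
      (hn : x.length + (n + 1) = b.length),
    (downTo2fin (r := r) b hbr hb' n x hxr hx hn).length = n + 1
  | 0, x, hxr, hx, hn => by simp [downTo2fin]; erw [Walk.length_copy]; rfl
  | n + 1, x, hxr, hx, hn => by
    simp [downTo2fin, downTo2fin_length b hbr hb' n]; erw [Walk.length_cons, downTo2fin_length b hbr hb' n]

lemma downTo2fin_support (b : List (Fin 2)) (hbr : b.length = r) (hb' : b.length ≤ r) :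
    ∀ (n : ℕ) (x : List (Fin 2)) (hxr : x.length < r) (hx : x <+: b)
      (hn : x.length + (n + 1) = b.length),
    ∀ z ∈ (downTo2fin (r := r) b hbr hb' n x hxr hx hn).support,
      (∃ (w : List (Fin 2)) (h : w.length < r), z = Sum.inr ⟨w, h⟩) ∨ z = Sum.inl ⟨b, hb'⟩
  | 0, x, hxr, hx, hn => by
    intro z hz
    simp only [downTo2fin, Walk.support_copy, Walk.support_cons, Walk.support_nil,
      List.mem_cons, List.mem_singleton] at hz
    erw [Walk.support_copy, Walk.support_cons, Walk.support_nil, List.mem_cons, List.mem_cons] at hz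
    rcases hz with rfl | rfl | h
    · exact Or.inl ⟨x, hxr, rfl⟩
    · right
      exact congrArg Sum.inl (Subtype.ext ((prefix_snoc b x hx (by omega)).eq_of_length (by simp; omega)))
    · exact absurd h (List.not_mem_nil)
  | n + 1, x, hxr, hx, hn => by
    intro z hz
    simp only [downTo2fin, Walk.support_cons, List.mem_cons] at hz
    erw [Walk.support_cons, List.mem_cons] at hz
    rcases hz with rfl | hz
    · exact Or.inl ⟨x, hxr, rfl⟩
    · exact downTo2fin_support b hbr hb' n _ _ _ _ z hz

end GTAux
namespace GTAux

instance (r t : ℕ) : DecidableEq (GTVert r t) :=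
  inferInstanceAs (DecidableEq ({l : List (Fin t) // l.length ≤ r} ⊕ {l : List (Fin t) // l.length < r}))

end GTAux

open GTAux SimpleGraph in
theorem GT_two_geodesics_between_quasiLeaves' (r : ℕ) (hr : 1 ≤ r)
    (u v : GTVert r 2) (hu : IsQuasiLeaf u) (hv : IsQuasiLeaf v) (huv : u ≠ v) :
    ∃ p q : (GT r 2).Walk u v,
      IsGeodesic (GT r 2) p ∧ IsGeodesic (GT r 2) q ∧ p ≠ q ∧
      (∀ z ∈ p.support, z ≠ u → z ≠ v → InCopyOne z) ∧
      (∀ z ∈ q.support, z ≠ u → z ≠ v → InCopyTwo z) ∧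
      (∀ w : (GT r 2).Walk u v, IsGeodesic (GT r 2) w → w = p ∨ w = q) := by
  classical
  -- Unpack the two quasi-leaves.
  cases u with
  | inr a => exact hu.elim
  | inl a =>
  cases v with
  | inr b => exact hv.elim
  | inl b =>
  obtain ⟨a, hale⟩ := a
  obtain ⟨b, hble⟩ := b
  have har : a.length = r := hu
  have hbr : b.length = r := hv
  have hab : a ≠ b := fun h => huv (congrArg Sum.inl (Subtype.ext h))
  set k := cp a b with hk
  have hkle : k ≤ r := by have := cp_le_left a b; omega
  have hklt : k < r := by
    rcases lt_or_eq_of_le hkle with h | h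
    · exact h
    · exact absurd (eq_of_cp_of_length a b (by omega) (by omega)) hab
  have hcpba : cp b a = k := by rw [cp_comm]
  -- the common prefix c and the parent a' of a
  set c := b.take k with hc
  have hceq : a.take k = c := take_cp a b
  have hclen : c.length = k := by rw [hc, List.length_take]; omega
  have hcb : c <+: b := List.take_prefix k b
  have hca : c <+: a := hceq ▸ List.take_prefix k a
  set a' := a.dropLast with ha'
  have ha'len : a'.length = r - 1 := by rw [ha', List.length_dropLast, har]
  have hane : a ≠ [] := by intro h; rw [h] at har; simp at har; omega
  have ha'a : a' ++ [a.getLast hane] = a := List.dropLast_append_getLast hane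
  have hca' : c <+: a' := by
    have h1 : a'.take k = c := by
      rw [ha', List.dropLast_eq_take, List.take_take, har, min_eq_left (by omega)]
      exact hceq
    exact h1 ▸ List.take_prefix k a'
  have ha'le : a'.length ≤ r := by omega
  have ha'r : a'.length < r := by omega
  have hclr : c.length < r := by omega
  -- potential value at u
  have hpsiu : psi b (Sum.inl ⟨a, hale⟩ : GTVert r 2) = (r - k) + (r - k) := by
    simp only [psi, lst_inl, psiL, hcpba, har]
  have hpsiv : psi b (Sum.inl ⟨b, hble⟩ : GTVert r 2) = 0 := psi_v_zero hbr hble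
  -- the two edges out of u
  have hadj1 : (GT r 2).Adj (Sum.inl ⟨a, hale⟩) (Sum.inl ⟨a', ha'le⟩) := by
    have h0 : (a' ++ [a.getLast hane]).length ≤ r := by rw [ha'a]; omega
    have := (adj_inl_inl (r := r) (i := a.getLast hane) ha'le h0).symm
    have he : (Sum.inl ⟨a' ++ [a.getLast hane], h0⟩ : GTVert r 2) = Sum.inl ⟨a, hale⟩ :=
      congrArg Sum.inl (Subtype.ext ha'a)
    rwa [he] at this
  have hadj2 : (GT r 2).Adj (Sum.inl ⟨a, hale⟩) (Sum.inr ⟨a', ha'r⟩) := by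
    have h0 : (a' ++ [a.getLast hane]).length ≤ r := by rw [ha'a]; omega
    have h3 : (a' ++ [a.getLast hane]).length = r := by rw [ha'a]; omega
    have := adj_inl_inr (r := r) (i := a.getLast hane) ha'r h0 h3
    have he : (Sum.inl ⟨a' ++ [a.getLast hane], h0⟩ : GTVert r 2) = Sum.inl ⟨a, hale⟩ :=
      congrArg Sum.inl (Subtype.ext ha'a)
    rwa [he] at this
  -- the copy-one geodesic
  have hn1 : c.length + (r - 1 - k) = a'.length := by omega
  have hn2 : c.length + (r - k) = b.length := by omega
  have hn3 : c.length + ((r - k - 1) + 1) = b.length := by omega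
  let asc1 := downTo1 a' ha'le (r - 1 - k) c hca' hn1
  let desc1 := downTo1 b hble (r - k) c hcb hn2
  let p1 : (GT r 2).Walk (Sum.inl ⟨a', ha'le⟩) (Sum.inl ⟨b, hble⟩) :=
    asc1.reverse.append desc1
  let p : (GT r 2).Walk (Sum.inl ⟨a, hale⟩) (Sum.inl ⟨b, hble⟩) := Walk.cons hadj1 p1
  have hp1len : p1.length = (r - 1 - k) + (r - k) := by
    simp only [p1, Walk.length_append, Walk.length_reverse, asc1, desc1,
      downTo1_length]
    erw [Walk.length_append, Walk.length_reverse, downTo1_length, downTo1_length]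
  have hplen : p.length = (r - k) + (r - k) := by
    simp only [p, Walk.length_cons, hp1len]; erw [Walk.length_cons, hp1len]; omega
  -- the copy-two geodesic
  let asc2 := downTo2mid a' ha'r (r - 1 - k) c hca' hn1
  let desc2 := downTo2fin b hbr hble (r - k - 1) c hclr hcb hn3
  let q1 : (GT r 2).Walk (Sum.inr ⟨a', ha'r⟩) (Sum.inl ⟨b, hble⟩) :=
    asc2.reverse.append desc2
  let q : (GT r 2).Walk (Sum.inl ⟨a, hale⟩) (Sum.inl ⟨b, hble⟩) := Walk.cons hadj2 q1
  have hq1len : q1.length = (r - 1 - k) + (r - k) := by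
    simp only [q1, Walk.length_append, Walk.length_reverse, asc2, desc2,
      downTo2mid_length, downTo2fin_length]
    erw [Walk.length_append, Walk.length_reverse, downTo2mid_length, downTo2fin_length]
    omega
  have hqlen : q.length = (r - k) + (r - k) := by
    simp only [q, Walk.length_cons, hq1len]; erw [Walk.length_cons, hq1len]; omega
  -- distance
  have hdist : (GT r 2).dist (Sum.inl ⟨a, hale⟩) (Sum.inl ⟨b, hble⟩) = (r - k) + (r - k) := by
    refine le_antisymm (hplen ▸ dist_le p) ?_
    obtain ⟨w0, hw0⟩ := Reachable.exists_walk_length_eq_dist p.reachable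
    have := psi_le_length hbr w0
    rw [hpsiv, hpsiu] at this
    omega
  -- support descriptions
  have hp1supp : ∀ z ∈ p1.support, ∃ (w : List (Fin 2)) (h : w.length ≤ r),
      z = Sum.inl ⟨w, h⟩ ∧ (w <+: a' ∨ w <+: b) := by
    intro z hz
    erw [Walk.support_append, List.mem_append] at hz
    rcases hz with hz | hz
    · erw [Walk.support_reverse, List.mem_reverse] at hz
      obtain ⟨w, h, rfl, hw⟩ := downTo1_support a' ha'le _ _ _ _ z hz
      exact ⟨w, h, rfl, Or.inl hw⟩
    · have hz' := List.mem_of_mem_tail hz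
      obtain ⟨w, h, rfl, hw⟩ := downTo1_support b hble _ _ _ _ z hz'
      exact ⟨w, h, rfl, Or.inr hw⟩
  have hq1supp : ∀ z ∈ q1.support,
      (∃ (w : List (Fin 2)) (h : w.length < r), z = Sum.inr ⟨w, h⟩) ∨
      z = Sum.inl ⟨b, hble⟩ := by
    intro z hz
    erw [Walk.support_append, List.mem_append] at hz
    rcases hz with hz | hz
    · erw [Walk.support_reverse, List.mem_reverse] at hz
      obtain ⟨w, h, rfl⟩ := downTo2mid_support a' ha'r _ _ _ _ z hz
      exact Or.inl ⟨w, h, rfl⟩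
    · exact downTo2fin_support b hbr hble _ _ _ _ _ z (List.mem_of_mem_tail hz)
  -- quasi-leaf freeness of p1, q1
  have hp1free : ∀ z ∈ p1.support, z ≠ Sum.inl ⟨b, hble⟩ → ¬ IsQuasiLeaf z := by
    intro z hz hzv hq
    obtain ⟨w, h, rfl, hw | hw⟩ := hp1supp z hz
    · have : w.length = r := hq
      have := hw.length_le
      omega
    · have hwr : w.length = r := hq
      exact hzv (congrArg Sum.inl (Subtype.ext (hw.eq_of_length (by omega))))
  have hq1free : ∀ z ∈ q1.support, z ≠ Sum.inl ⟨b, hble⟩ → ¬ IsQuasiLeaf z := by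
    intro z hz hzv hq
    rcases hq1supp z hz with ⟨w, h, rfl⟩ | rfl
    · exact hq
    · exact hzv rfl
  -- geodesics
  have hgp : IsGeodesic (GT r 2) p :=
    ⟨tight_path hbr hpsiv p (by rw [hplen, hpsiu]), by rw [hplen, hdist]⟩
  have hgq : IsGeodesic (GT r 2) q :=
    ⟨tight_path hbr hpsiv q (by rw [hqlen, hpsiu]), by rw [hqlen, hdist]⟩
  refine ⟨p, q, hgp, hgq, ?_, ?_, ?_, ?_⟩
  · -- p ≠ q
    intro hpq
    have hmem : (Sum.inr ⟨a', ha'r⟩ : GTVert r 2) ∈ q.support := by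
      erw [Walk.support_cons]
      exact List.mem_cons_of_mem _ (Walk.start_mem_support q1)
    erw [← hpq, Walk.support_cons, List.mem_cons] at hmem
    rcases hmem with h | h
    · cases h
    · obtain ⟨w, hh, heq, -⟩ := hp1supp _ h
      cases heq
  · -- support of p in copy one
    intro z hz hzu hzv
    erw [Walk.support_cons, List.mem_cons] at hz
    rcases hz with rfl | hz
    · exact absurd rfl hzu
    · obtain ⟨w, h, rfl, hw | hw⟩ := hp1supp z hz
      · show w.length < r
        have := hw.length_le
        omega
      · show w.length < r
        rcases lt_or_eq_of_le (hbr ▸ hw.length_le) with h' | h'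
        · exact h'
        · exact absurd (congrArg Sum.inl (Subtype.ext (hw.eq_of_length (by omega)))) hzv
  · -- support of q in copy two
    intro z hz hzu hzv
    erw [Walk.support_cons, List.mem_cons] at hz
    rcases hz with rfl | hz
    · exact absurd rfl hzu
    · rcases hq1supp z hz with ⟨w, h, rfl⟩ | rfl
      · trivial
      · exact absurd rfl hzv
  · -- uniqueness
    intro w hw
    have hwlen : w.length = (r - k) + (r - k) := by rw [hw.2, hdist]
    have hpsiua : psi a (Sum.inl ⟨a, hale⟩ : GTVert r 2) = 0 := psi_v_zero har hale
    have hwfree : ∀ z ∈ w.support, z ≠ Sum.inl ⟨b, hble⟩ →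
        IsQuasiLeaf z → z = Sum.inl ⟨a, hale⟩ := by
      intro z hz hzv hq
      cases z with
      | inr y => exact hq.elim
      | inl y =>
        obtain ⟨y, hyle⟩ := y
        have hyr : y.length = r := hq
        have hlensum : (w.takeUntil _ hz).length + (w.dropUntil _ hz).length = w.length := by
          conv_rhs => rw [← Walk.take_spec w hz]
          erw [Walk.length_append]
        have h1 : psi b (Sum.inl ⟨y, hyle⟩ : GTVert r 2) ≤ (w.dropUntil _ hz).length := by
          have := psi_le_length hbr (w.dropUntil _ hz)
          rw [hpsiv] at this; omega
        have h2 : psi a (Sum.inl ⟨y, hyle⟩ : GTVert r 2) ≤ (w.takeUntil _ hz).length := by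
          have := psi_le_length har (w.takeUntil _ hz).reverse
          erw [hpsiua, Walk.length_reverse] at this; omega
        have e1 : psi b (Sum.inl ⟨y, hyle⟩ : GTVert r 2) = (r - cp b y) + (r - cp b y) := by
          simp only [psi, lst_inl, psiL, hyr]
        have e2 : psi a (Sum.inl ⟨y, hyle⟩ : GTVert r 2) = (r - cp a y) + (r - cp a y) := by
          simp only [psi, lst_inl, psiL, hyr]
        have hm1 : cp a y ≤ r := by have := cp_le_left a y; omega
        have hm2 : cp b y ≤ r := by have := cp_le_left b y; omega
        have hmin : min (cp a y) (cp b y) ≤ k := by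
          have h3 := cp_min a y b
          rw [cp_comm y b] at h3
          omega
        have hcase : cp a y = r ∨ cp b y = r := by omega
        rcases hcase with hcy | hcy
        · exact congrArg Sum.inl
            (Subtype.ext (eq_of_cp_of_length a y (by omega) (by omega)).symm)
        · exact absurd (congrArg Sum.inl
            (Subtype.ext (eq_of_cp_of_length b y (by omega) (by omega)).symm)) hzv
    cases w with
    | nil => erw [Walk.length_nil] at hwlen; omega
    | @cons _ z0 _ hadj t =>
      erw [Walk.length_cons] at hwlen
      obtain ⟨htlen, hstep⟩ := tight_cons hbr hpsiv hadj t (by rw [hpsiu]; omega)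
      rw [hpsiu] at hstep
      have htfree : ∀ z ∈ t.support, z ≠ Sum.inl ⟨b, hble⟩ → ¬ IsQuasiLeaf z := by
        intro z hz hzv hq
        have hzu := hwfree z (by erw [Walk.support_cons]; exact List.mem_cons_of_mem _ hz) hzv hq
        have hle := tight_support hbr hpsiv t htlen z hz
        rw [hzu, hpsiu] at hle
        omega
      obtain ⟨y, hy, i, hyi, hz0⟩ := adj_of_leaf har hadj
      have hya' : y = a' := by rw [ha', hyi, List.dropLast_concat]
      subst hya'
      rcases hz0 with hz0 | hz0 <;> subst hz0
      · left
        have ht : t = p1 := by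
          refine unique_tight hbr hble _ _ rfl t p1 htlen ?_ htfree hp1free
          rw [hp1len]
          omega
        rw [ht]; rfl
      · right
        have ht : t = q1 := by
          refine unique_tight hbr hble _ _ rfl t q1 htlen ?_ htfree hq1free
          rw [hq1len]
          omega
        rw [ht]; rfl

/-- Between any two distinct quasi-leaves of the glued binary tree `GT(r)`
there are exactly two geodesics: one with all internal vertices in the first
tree copy and one with all internal vertices in the second tree copy. -/
theorem GT_two_geodesics_between_quasiLeaves (r : ℕ) (hr : 1 ≤ r)
    (u v : GTVert r 2) (hu : IsQuasiLeaf u) (hv : IsQuasiLeaf v) (huv : u ≠ v) :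
    ∃ p q : (GT r 2).Walk u v,
      IsGeodesic (GT r 2) p ∧ IsGeodesic (GT r 2) q ∧ p ≠ q ∧
      (∀ z ∈ p.support, z ≠ u → z ≠ v → InCopyOne z) ∧
      (∀ z ∈ q.support, z ≠ u → z ≠ v → InCopyTwo z) ∧
      (∀ w : (GT r 2).Walk u v, IsGeodesic (GT r 2) w → w = p ∨ w = q) := by
  exact GT_two_geodesics_between_quasiLeaves' r hr u v hu hv huv
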